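/- (Sensitivity of the value function: −M(x,r) ⊆ ∂v(r).) Let r ∈ ℝ^J with r ≥ 0, let x ∈ S_c(r), and let λ ∈ M(x,r). Then −λ is a subgradient of the value function v at r relative to the domain ℝ^J_+; that is, for every r' ∈ ℝ^J with r' ≥ 0, v(r') ≥ v(r) − ⟨λ, r' − r⟩ (equivalently, v(r') ≥ v(r) + ⟨−λ, r' − r⟩). -/
import Mathlib


open scoped InnerProductSpace
open Filter Topology

noncomputable section

/-- Euclidean space `ℝ^m`. -/
abbrev Eu (m : ℕ) : Type := EuclideanSpace ℝ (Fin m)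

/-- Subgradient set (in the sense of convex analysis) of `f` at `x`. -/
def Subgrad {E : Type*} [NormedAddCommGroup E] [InnerProductSpace ℝ E]
    (f : E → ℝ) (x : E) : Set E :=
  {g | ∀ y, f x + ⟪g, y - x⟫_ℝ ≤ f y}

/-- Feasible region `F(r) = {x : P_i(x) ≤ r_i, i = 1,…,J}`. -/
def Feas {n J : ℕ} (P : Fin J → Eu n → ℝ) (r : Eu J) : Set (Eu n) :=
  {x | ∀ i, P i x ≤ r i}

/-- `S_p(λ)`: global minimizers of `x' ↦ l(x') + Σ_i λ_i P_i(x')`. -/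
def Sp {n J : ℕ} (l : Eu n → ℝ) (P : Fin J → Eu n → ℝ) (lam : Eu J) : Set (Eu n) :=
  {x | ∀ x', l x + ∑ i, lam i * P i x ≤ l x' + ∑ i, lam i * P i x'}

/-- `S_c(r)`: global minimizers of `l` over `F(r)`. -/
def Sc {n J : ℕ} (l : Eu n → ℝ) (P : Fin J → Eu n → ℝ) (r : Eu J) : Set (Eu n) :=
  {x | x ∈ Feas P r ∧ ∀ x' ∈ Feas P r, l x ≤ l x'}

/-- The multiplier set `M(x,r)`. -/
def Mset {n J : ℕ} (l : Eu n → ℝ) (P : Fin J → Eu n → ℝ) (x : Eu n) (r : Eu J) :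
    Set (Eu J) :=
  {lam | (∀ i, 0 ≤ lam i) ∧
    (∃ u ∈ Subgrad l x, ∃ v : Fin J → Eu n,
      (∀ i, v i ∈ Subgrad (P i) x) ∧ u + ∑ i, lam i • v i = 0) ∧
    (∀ i, lam i * (P i x - r i) = 0)}

/-- The value function `v(r) = inf { l(x) : x ∈ F(r) }`. -/
def vfun {n J : ℕ} (l : Eu n → ℝ) (P : Fin J → Eu n → ℝ) (r : Eu J) : ℝ :=
  sInf (l '' Feas P r)

theorem stmt7 {n J : ℕ} (hn : 1 ≤ n) (hJ : 1 ≤ J)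
    (l : Eu n → ℝ) (P : Fin J → Eu n → ℝ)
    (hlcv : ConvexOn ℝ Set.univ l) (hlc : Continuous l)
    (hPcv : ∀ i, ConvexOn ℝ Set.univ (P i)) (hPc : ∀ i, Continuous (P i))
    (hPnn : ∀ i x, 0 ≤ P i x)
    (hFne : ∀ r : Eu J, (∀ i, 0 ≤ r i) → (Feas P r).Nonempty)
    (hbdd : ∀ r : Eu J, (∀ i, 0 ≤ r i) → BddBelow (l '' Feas P r))
    (r : Eu J) (hr : ∀ i, 0 ≤ r i)
    (x : Eu n) (hx : x ∈ Sc l P r)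
    (lam : Eu J) (hlam : lam ∈ Mset l P x r) :
    ∀ r' : Eu J, (∀ i, 0 ≤ r' i) →
      vfun l P r + ⟪-lam, r' - r⟫_ℝ ≤ vfun l P r' := by
  obtain ⟨hnn, ⟨u, hu, v, hv, hsum⟩, hcs⟩ := hlam
  intro r' hr'
  have hxF := hx.1
  have hmin : ∀ x', l x + ∑ i, lam i * P i x ≤ l x' + ∑ i, lam i * P i x' := by
    intro x'
    have h1 := hu x'
    have h2 : (∑ i, lam i * P i x) + ⟪∑ i, lam i • v i, x' - x⟫_ℝ ≤ ∑ i, lam i * P i x' := by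
      rw [sum_inner, ← Finset.sum_add_distrib]
      apply Finset.sum_le_sum
      intro i _
      rw [real_inner_smul_left]
      have := hv i x'
      nlinarith [hnn i]
    have h4 : ⟪u, x' - x⟫_ℝ + ⟪∑ i, lam i • v i, x' - x⟫_ℝ = 0 := by
      rw [← inner_add_left, hsum, inner_zero_left]
    linarith
  have hvr : vfun l P r = l x := by
    apply le_antisymm
    · exact csInf_le (hbdd r hr) ⟨x, hxF, rfl⟩
    · apply le_csInf ((hFne r hr).image l)
      rintro b ⟨y, hy, rfl⟩
      exact hx.2 y hy
  apply le_csInf ((hFne r' hr').image l)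
  rintro b ⟨y, hy, rfl⟩
  have h5 := hmin y
  have hPx : ∑ i, lam i * P i x = ∑ i, lam i * r i := by
    apply Finset.sum_congr rfl
    intro i _
    have := hcs i; nlinarith
  have hPy : ∑ i, lam i * P i y ≤ ∑ i, lam i * r' i := by
    apply Finset.sum_le_sum
    intro i _
    exact mul_le_mul_of_nonneg_left (hy i) (hnn i)
  have hip : ⟪-lam, r' - r⟫_ℝ = (∑ i, lam i * r i) - ∑ i, lam i * r' i := by
    simp only [PiLp.inner_apply, RCLike.inner_apply, PiLp.sub_apply, PiLp.neg_apply,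
      starRingEnd_apply, star_trivial, ← Finset.sum_sub_distrib]
    apply Finset.sum_congr rfl
    intro i _
    ring
  rw [hvr, hip]
  linarith
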